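/- Let 𝓛 be a line (a one-dimensional affine subspace) in the Euclidean plane ℝ² that does not pass through the origin, and let c be a positive real number with c ≠ 1. Then there exists x₀ ∈ 𝓛 such that ‖x₀‖ ≤ ‖x‖ for all x ∈ 𝓛, and for every point x ∈ 𝓛 the infimum distance from x to the set c𝓛 := {c·y : y ∈ 𝓛} equals |1 − c|·‖x₀‖. -/

import Mathlib

/-- Lemma 1.2, second part: for a line `𝓛` in `ℝ²` not through the origin and
`0 < c`, `c ≠ 1`, there is a point `x₀ ∈ 𝓛` of minimal norm, and the infimum
distance from any point of `𝓛` to `c𝓛` equals `|1 - c| * ‖x₀‖`. -/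
theorem dist_line_smul_line
    (𝓛 : AffineSubspace ℝ (EuclideanSpace ℝ (Fin 2)))
    (hdim : Module.finrank ℝ 𝓛.direction = 1)
    (h0 : (0 : EuclideanSpace ℝ (Fin 2)) ∉ 𝓛)
    (c : ℝ) (hc : 0 < c) (hc1 : c ≠ 1) :
    ∃ x₀ ∈ 𝓛, (∀ x ∈ 𝓛, ‖x₀‖ ≤ ‖x‖) ∧
      ∀ x ∈ 𝓛,
        Metric.infDist x ((fun y => c • y) '' (𝓛 : Set (EuclideanSpace ℝ (Fin 2)))) =
          |1 - c| * ‖x₀‖ := by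
  have hne : (𝓛 : Set (EuclideanSpace ℝ (Fin 2))).Nonempty := by
    by_contra h
    rw [Set.not_nonempty_iff_eq_empty, AffineSubspace.coe_eq_bot_iff] at h
    rw [h, AffineSubspace.direction_bot, finrank_bot] at hdim
    simp at hdim
  haveI : Nonempty 𝓛 := hne.to_subtype
  set x₀ : EuclideanSpace ℝ (Fin 2) := ↑(EuclideanGeometry.orthogonalProjection 𝓛 0) with hx₀
  have hx₀mem : x₀ ∈ 𝓛 := (EuclideanGeometry.orthogonalProjection 𝓛 0).2
  have hperp : x₀ ∈ 𝓛.directionᗮ := by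
    have h := EuclideanGeometry.vsub_orthogonalProjection_mem_direction_orthogonal 𝓛 0
    have h2 := (𝓛.directionᗮ).neg_mem h
    simpa [vsub_eq_sub] using h2
  have hinner : ∀ v ∈ 𝓛.direction, inner ℝ v x₀ = (0 : ℝ) := fun v hv =>
    (Submodule.mem_orthogonal _ _).mp hperp v hv
  -- Pythagorean key inequality
  have key : ∀ (a : ℝ), ∀ v ∈ 𝓛.direction, |a| * ‖x₀‖ ≤ ‖a • x₀ + v‖ := by
    intro a v hv
    have h1 : inner ℝ v (a • x₀) = (0 : ℝ) := by
      rw [inner_smul_right, hinner v hv, mul_zero]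
    have h2 : ‖a • x₀ + v‖ ^ 2 = ‖a • x₀‖ ^ 2 + ‖v‖ ^ 2 := by
      rw [add_comm]
      rw [norm_add_sq_real, h1]; ring
    have h3 : ‖a • x₀‖ = |a| * ‖x₀‖ := by
      rw [norm_smul, Real.norm_eq_abs]
    nlinarith [norm_nonneg (a • x₀ + v), norm_nonneg v, abs_nonneg a, norm_nonneg x₀]
  refine ⟨x₀, hx₀mem, ?_, ?_⟩
  · intro x hx
    have hv : x - x₀ ∈ 𝓛.direction := by
      simpa [vsub_eq_sub] using AffineSubspace.vsub_mem_direction hx hx₀mem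
    have := key 1 (x - x₀) hv
    simpa using this
  · intro x hx
    have hxv : x - x₀ ∈ 𝓛.direction := by
      simpa [vsub_eq_sub] using AffineSubspace.vsub_mem_direction hx hx₀mem
    have hSne : ((fun y => c • y) '' (𝓛 : Set (EuclideanSpace ℝ (Fin 2)))).Nonempty :=
      hne.image _
    apply le_antisymm
    · -- upper bound via y = x₀ + c⁻¹ • (x - x₀)
      have hy : x₀ + c⁻¹ • (x - x₀) ∈ 𝓛 := by
        have := AffineSubspace.vadd_mem_of_mem_direction
          (𝓛.direction.smul_mem c⁻¹ hxv) hx₀mem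
        simpa [vadd_eq_add, add_comm] using this
      have hmem : c • (x₀ + c⁻¹ • (x - x₀)) ∈
          (fun y => c • y) '' (𝓛 : Set (EuclideanSpace ℝ (Fin 2))) :=
        Set.mem_image_of_mem _ hy
      have hd : dist x (c • (x₀ + c⁻¹ • (x - x₀))) = |1 - c| * ‖x₀‖ := by
        rw [dist_eq_norm]
        have : x - c • (x₀ + c⁻¹ • (x - x₀)) = (1 - c) • x₀ := by
          rw [smul_add, smul_smul, mul_inv_cancel₀ hc.ne']
          module
        rw [this, norm_smul, Real.norm_eq_abs]
      calc Metric.infDist x ((fun y => c • y) '' (𝓛 : Set (EuclideanSpace ℝ (Fin 2))))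
          ≤ dist x (c • (x₀ + c⁻¹ • (x - x₀))) := Metric.infDist_le_dist_of_mem hmem
        _ = |1 - c| * ‖x₀‖ := hd
    · by_contra hlt
      push_neg at hlt
      obtain ⟨z, ⟨y, hy, rfl⟩, hdz⟩ := (Metric.infDist_lt_iff hSne).mp hlt
      apply absurd hdz; push_neg
      have hyv : y - x₀ ∈ 𝓛.direction := by
        simpa [vsub_eq_sub] using AffineSubspace.vsub_mem_direction hy hx₀mem
      have hveq : x - c • y = (1 - c) • x₀ + ((x - x₀) - c • (y - x₀)) := by
        module
      have hvmem : (x - x₀) - c • (y - x₀) ∈ 𝓛.direction :=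
        𝓛.direction.sub_mem hxv (𝓛.direction.smul_mem c hyv)
      have := key (1 - c) _ hvmem
      rw [dist_eq_norm, hveq]
      exact this
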